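/- arXiv:1810.02573 — 3 statements merged into one kernel-verified Lean document; each statement's English description precedes it below -/
import Mathlib

section
/- Let p be an odd prime and n_p the least positive quadratic non-residue modulo p. If a is a quadratic non-residue modulo p and n is squarefull with n ≡ a (mod p) and p ∤ n, then writing n = r^2 * s with s | r, we have s ≥ n_p; consequently n ≥ n_p^3. -/
def Squarefull (n : ℕ) : Prop := ∀ p : ℕ, p.Prime → p ∣ n → p ^ 2 ∣ n

theorem squarefull_nonresidue_lower_bound (p : ℕ) [Fact p.Prime] (hp : Odd p)
    (np : ℕ) (hnp0 : 0 < np) (hnpns : ¬ IsSquare (np : ZMod p))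
    (hnpmin : ∀ m : ℕ, 0 < m → ¬ IsSquare (m : ZMod p) → np ≤ m)
    (a : ZMod p) (ha : ¬ IsSquare a)
    (n : ℕ) (hn : 0 < n) (hsf : Squarefull n) (hcong : (n : ZMod p) = a)
    (hpn : ¬ (p ∣ n))
    (r s : ℕ) (hr : 0 < r) (hs : 0 < s) (hsr : s ∣ r) (hrs : n = r ^ 2 * s) :
    np ≤ s ∧ np ^ 3 ≤ n := by
  have hss : ¬ IsSquare (s : ZMod p) := by
    intro ⟨t, ht⟩
    apply ha
    rw [← hcong, hrs]
    push_cast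
    exact ⟨(r : ZMod p) * t, by rw [ht]; ring⟩
  have h1 : np ≤ s := hnpmin s hs hss
  refine ⟨h1, ?_⟩
  have hsr' : s ≤ r := Nat.le_of_dvd hr hsr
  calc np ^ 3 ≤ s ^ 3 := Nat.pow_le_pow_left h1 3
    _ = s ^ 2 * s := by ring
    _ ≤ r ^ 2 * s := Nat.mul_le_mul_right s (Nat.pow_le_pow_left hsr' 2)
    _ = n := hrs.symm
end

section
/- Let p be an odd prime and n_p the least quadratic non-residue modulo p. Then the maximum over all residues a mod p of F(a,p), the least positive squarefull integer congruent to a mod p, satisfies max_a F(a,p) ≥ c * p^2 * n_p for some absolute constant c > 0. -/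
lemma squarefull_decomp (m : ℕ) (hm : 0 < m) (h : Squarefull m) :
    ∃ a t : ℕ, 0 < a ∧ 0 < t ∧ m = a ^ 3 * t ^ 2 := by
  obtain ⟨a, b, ha, hb, hab, hsq⟩ := Nat.sq_mul_squarefree_of_pos hm
  have hdvd : a ∣ b := by
    rw [← Nat.factorization_le_iff_dvd ha.ne' hb.ne']
    intro q
    rcases Nat.eq_zero_or_pos (a.factorization q) with h0 | h0
    · simp [h0]
    · have hqmem : q ∈ a.primeFactors := by
        rw [← Nat.support_factorization]; exact Finsupp.mem_support_iff.mpr h0.ne'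
      have hq : q.Prime := Nat.prime_of_mem_primeFactors hqmem
      have hqa : q ∣ a := Nat.dvd_of_mem_primeFactors hqmem
      have hqm : q ∣ m := hab ▸ Dvd.dvd.mul_left hqa _
      have hq2 : q ^ 2 ∣ m := h q hq hqm
      have hfa : a.factorization q = 1 :=
        le_antisymm (hsq.natFactorization_le_one q) h0
      have hfm : 2 ≤ m.factorization q := by
        rw [← Nat.Prime.pow_dvd_iff_le_factorization hq hm.ne'] ; exact hq2
      rw [← hab, Nat.factorization_mul (by positivity) ha.ne', Nat.factorization_pow] at hfm
      simp only [Finsupp.coe_add, Finsupp.coe_smul, Pi.add_apply, Pi.smul_apply, smul_eq_mul,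
        hfa] at hfm
      omega
  obtain ⟨t, ht⟩ := hdvd
  have ht0 : 0 < t := by
    rcases Nat.eq_zero_or_pos t with rfl | h
    · simp at ht; omega
    · exact h
  exact ⟨a, t, ha, ht0, by rw [← hab, ht]; ring⟩

lemma step_ineq (x : ℝ) (hx : 2 ≤ x) :
    1 / (x * Real.sqrt x) ≤ 2 / Real.sqrt (x - 1) - 2 / Real.sqrt x := by
  set u := Real.sqrt (x - 1) with hu_def
  set v := Real.sqrt x with hv_def
  have hx1 : (1:ℝ) ≤ x - 1 := by linarith
  have hu0 : 0 < u := Real.sqrt_pos.mpr (by linarith)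
  have hv0 : 0 < v := Real.sqrt_pos.mpr (by linarith)
  have hu2 : u ^ 2 = x - 1 := Real.sq_sqrt (by linarith)
  have hv2 : v ^ 2 = x := Real.sq_sqrt (by linarith)
  have huv : u ≤ v := Real.sqrt_le_sqrt (by linarith)
  have key : u * (1 + 2 * v ^ 2) ≤ 2 * v ^ 3 := by
    have h1 : 0 < 2 * v ^ 3 + u * (1 + 2 * v ^ 2) := by positivity
    have h2 : (2 * v ^ 3 - u * (1 + 2 * v ^ 2)) * (2 * v ^ 3 + u * (1 + 2 * v ^ 2)) =
        4 * (v ^ 2) ^ 3 - u ^ 2 * (1 + 2 * v ^ 2) ^ 2 := by ring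
    nlinarith [sq_nonneg v, sq_nonneg u]
  rw [div_sub_div _ _ hu0.ne' hv0.ne', div_le_div_iff₀ (by positivity) (by positivity)]
  have hxv : x * v = v ^ 3 := by rw [← hv2]; ring
  nlinarith [mul_pos hu0 hv0, mul_le_mul_of_nonneg_left key hv0.le]

lemma tele_sum (a : ℕ) (ha : 2 ≤ a) : ∀ b : ℕ, a - 1 ≤ b →
    ∑ s ∈ Finset.Icc a b, 1 / ((s:ℝ) * Real.sqrt s) ≤
      2 / Real.sqrt (a - 1) - 2 / Real.sqrt b := by
  intro b hb
  induction b, hb using Nat.le_induction with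
  | base =>
      have : Finset.Icc a (a-1) = ∅ := by
        apply Finset.Icc_eq_empty; omega
      rw [this, Nat.cast_sub (by omega : 1 ≤ a)]
      simp
  | succ b hb ih =>
      rw [Finset.sum_Icc_succ_top (by omega : a ≤ b + 1)]
      have hb2 : (2:ℝ) ≤ ((b:ℝ) + 1) := by
        have : 1 ≤ b := by omega
        exact_mod_cast by omega
      have hstep := step_ineq ((b:ℝ) + 1) hb2
      have hcast : ((b:ℝ) + 1) - 1 = (b:ℝ) := by ring
      rw [hcast] at hstep
      push_cast
      linarith

lemma count_bound (np M : ℕ) (h2 : 2 ≤ np) :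
    ((((Finset.Icc np M) ×ˢ (Finset.Icc 1 M)).filter
        (fun q : ℕ × ℕ => q.1 ^ 3 * q.2 ^ 2 ≤ M)).card : ℝ) ≤
      Real.sqrt M * (2 / Real.sqrt ((np:ℝ) - 1)) := by
  classical
  set T := (((Finset.Icc np M) ×ˢ (Finset.Icc 1 M)).filter
      (fun q : ℕ × ℕ => q.1 ^ 3 * q.2 ^ 2 ≤ M))
  have hsub : T ⊆ (Finset.Icc np M).biUnion
      (fun s => {s} ×ˢ Finset.Icc 1 (Nat.sqrt (M / s ^ 3))) := by
    intro q hq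
    simp only [T, Finset.mem_filter, Finset.mem_product, Finset.mem_Icc] at hq
    obtain ⟨⟨⟨hs1, hs2⟩, ht1, ht2⟩, hle⟩ := hq
    simp only [Finset.mem_biUnion, Finset.mem_product, Finset.mem_singleton, Finset.mem_Icc]
    refine ⟨q.1, ⟨hs1, hs2⟩, rfl, ht1, ?_⟩
    rw [Nat.le_sqrt]
    rw [Nat.le_div_iff_mul_le (Nat.pow_pos (n := 3) (by omega))]
    calc q.2 * q.2 * q.1 ^ 3 = q.1 ^ 3 * q.2 ^ 2 := by ring
    _ ≤ M := hle
  have hcard : T.card ≤ ∑ s ∈ Finset.Icc np M, Nat.sqrt (M / s ^ 3) := by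
    refine (Finset.card_le_card hsub).trans ?_
    refine (Finset.card_biUnion_le).trans ?_
    apply Finset.sum_le_sum
    intro s _
    rw [Finset.card_product, Finset.card_singleton, Nat.card_Icc]
    omega
  have hterm : ∀ s ∈ Finset.Icc np M,
      ((Nat.sqrt (M / s ^ 3) : ℝ)) ≤ Real.sqrt M * (1 / ((s:ℝ) * Real.sqrt s)) := by
    intro s hs
    have hs1 : np ≤ s := (Finset.mem_Icc.mp hs).1
    have hs0 : (0:ℝ) < s := by
      have : 0 < s := by omega
      exact_mod_cast this
    have h1 : ((Nat.sqrt (M / s ^ 3) : ℝ)) ≤ Real.sqrt ((M / s ^ 3 : ℕ) : ℝ) :=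
      Real.nat_sqrt_le_real_sqrt
    have h2 : Real.sqrt ((M / s ^ 3 : ℕ) : ℝ) ≤ Real.sqrt ((M:ℝ) / (s:ℝ) ^ 3) :=
      Real.sqrt_le_sqrt (by push_cast; exact_mod_cast Nat.cast_div_le)
    have h3 : Real.sqrt ((M:ℝ) / (s:ℝ) ^ 3) = Real.sqrt M / Real.sqrt ((s:ℝ) ^ 3) :=
      Real.sqrt_div (by positivity) _
    have h4 : Real.sqrt ((s:ℝ) ^ 3) = (s:ℝ) * Real.sqrt s := by
      rw [show ((s:ℝ)) ^ 3 = ((s:ℝ) * Real.sqrt s) ^ 2 by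
        rw [mul_pow, Real.sq_sqrt hs0.le]; ring]
      exact Real.sqrt_sq (by positivity)
    rw [h4] at h3
    calc ((Nat.sqrt (M / s ^ 3) : ℝ)) ≤ Real.sqrt ((M:ℝ) / (s:ℝ) ^ 3) := h1.trans h2
    _ = Real.sqrt M * (1 / ((s:ℝ) * Real.sqrt s)) := by rw [h3]; ring
  calc (T.card : ℝ) ≤ ∑ s ∈ Finset.Icc np M, ((Nat.sqrt (M / s ^ 3) : ℝ)) := by
        exact_mod_cast hcard
    _ ≤ ∑ s ∈ Finset.Icc np M, Real.sqrt M * (1 / ((s:ℝ) * Real.sqrt s)) :=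
        Finset.sum_le_sum hterm
    _ = Real.sqrt M * ∑ s ∈ Finset.Icc np M, 1 / ((s:ℝ) * Real.sqrt s) := by
        rw [Finset.mul_sum]
    _ ≤ Real.sqrt M * (2 / Real.sqrt ((np:ℝ) - 1)) := by
        apply mul_le_mul_of_nonneg_left _ (Real.sqrt_nonneg _)
        by_cases hM : np - 1 ≤ M
        · have := tele_sum np h2 M hM
          have hnn : 0 ≤ 2 / Real.sqrt M := by positivity
          linarith
        · have : Finset.Icc np M = ∅ := Finset.Icc_eq_empty (by omega)
          rw [this]
          simp
          positivity

theorem max_F_lower_bound :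
    ∃ c : ℝ, 0 < c ∧ ∀ (p : ℕ), p.Prime → Odd p →
      ∀ np : ℕ, 0 < np → ¬ IsSquare (np : ZMod p) →
      (∀ m : ℕ, 0 < m → ¬ IsSquare (m : ZMod p) → np ≤ m) →
      ∀ M : ℕ,
      (∀ a : ZMod p, ∃ n : ℕ, 0 < n ∧ n ≤ M ∧ Squarefull n ∧ (n : ZMod p) = a) →
      c * p ^ 2 * np ≤ M := by
  refine ⟨1/72, by norm_num, ?_⟩
  intro p hp hodd np hnp0 hnpns hmin M H
  haveI : Fact p.Prime := ⟨hp⟩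
  classical
  obtain ⟨kk, hkk⟩ := hodd
  have hp3 : 3 ≤ p := by have := hp.two_le; omega
  have hnp2 : 2 ≤ np := by
    rcases Nat.lt_or_ge np 2 with h | h
    · interval_cases np
      · exact (hnpns (by norm_num)).elim
    · exact h
  choose nfun hpos hle hsf hcast using H
  set q := (p - 1) / 2 with hq
  have hq1 : 1 ≤ q := by omega
  have hqp : 2 * q + 1 = p := by omega
  set T := (((Finset.Icc np M) ×ˢ (Finset.Icc 1 M)).filter
      (fun w : ℕ × ℕ => w.1 ^ 3 * w.2 ^ 2 ≤ M)) with hT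
  -- non-square classes
  have hkns : ∀ k : ℕ, 0 < k → k < p →
      ¬ IsSquare ((np : ZMod p) * (k : ZMod p) ^ 2) := by
    intro k hk0 hkp hsqr
    have hk : (k : ZMod p) ≠ 0 := by
      rw [Ne, ZMod.natCast_eq_zero_iff]
      exact fun hdvd => absurd (Nat.le_of_dvd hk0 hdvd) (by omega)
    obtain ⟨r, hr⟩ := hsqr
    apply hnpns
    refine ⟨r * ((k : ZMod p))⁻¹, ?_⟩
    field_simp
    linear_combination hr
  have key : ∀ k : ℕ, ∃ st : ℕ × ℕ, 1 ≤ k → k ≤ q →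
      (st ∈ T ∧ ((st.1 ^ 3 * st.2 ^ 2 : ℕ) : ZMod p)
        = (np : ZMod p) * (k : ZMod p) ^ 2) := by
    intro k
    by_cases hk : 1 ≤ k ∧ k ≤ q
    · obtain ⟨hk1, hk2⟩ := hk
      have hkp : k < p := by omega
      set cl := (np : ZMod p) * (k : ZMod p) ^ 2 with hcl
      have hclns : ¬ IsSquare cl := hkns k hk1 hkp
      obtain ⟨a, t, ha, ht, hdec⟩ :=
        squarefull_decomp (nfun cl) (hpos cl) (hsf cl)
      have hclass : ((a ^ 3 * t ^ 2 : ℕ) : ZMod p) = cl := by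
        rw [← hdec]; exact hcast cl
      have hans : ¬ IsSquare ((a : ZMod p)) := by
        intro ⟨x, hx⟩
        apply hclns
        rw [← hclass]
        refine ⟨x ^ 3 * (t : ZMod p), ?_⟩
        push_cast
        rw [hx]
        ring
      have hnpa : np ≤ a := hmin a ha hans
      have hnM : a ^ 3 * t ^ 2 ≤ M := by rw [← hdec]; exact hle cl
      have haM : a ≤ M := le_trans (le_trans (Nat.le_self_pow (by norm_num) a)
        (Nat.le_mul_of_pos_right _ (by positivity))) hnM
      have htM : t ≤ M := le_trans (le_trans (Nat.le_self_pow (by norm_num) t)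
        (Nat.le_mul_of_pos_left _ (by positivity))) hnM
      refine ⟨(a, t), fun _ _ => ⟨?_, hclass⟩⟩
      simp only [hT, Finset.mem_filter, Finset.mem_product, Finset.mem_Icc]
      exact ⟨⟨⟨hnpa, haM⟩, ht, htM⟩, hnM⟩
    · exact ⟨(0, 0), fun h1 h2 => absurd ⟨h1, h2⟩ hk⟩
  choose f hf using key
  have hinj : (Finset.Icc 1 q).card ≤ T.card := by
    apply Finset.card_le_card_of_injOn f
    · intro k hk
      rw [Finset.mem_coe, Finset.mem_Icc] at hk
      exact (hf k hk.1 hk.2).1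
    · intro k hk k' hk' heq
      rw [Finset.mem_coe, Finset.mem_Icc] at hk hk'
      have h1 := (hf k hk.1 hk.2).2
      have h2 := (hf k' hk'.1 hk'.2).2
      rw [heq] at h1
      have hcls : (np : ZMod p) * (k : ZMod p) ^ 2
          = (np : ZMod p) * (k' : ZMod p) ^ 2 := by rw [← h1, ← h2]
      have hnp0' : (np : ZMod p) ≠ 0 := fun h0 => hnpns (h0 ▸ (IsSquare.zero))
      have hk2 : (k : ZMod p) ^ 2 = (k' : ZMod p) ^ 2 :=
        mul_left_cancel₀ hnp0' hcls
      have := sq_eq_sq_iff_eq_or_eq_neg.mp hk2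
      rcases this with h | h
      · have : k % p = k' % p := by
          have := congrArg ZMod.val h
          rwa [ZMod.val_natCast, ZMod.val_natCast] at this
        rw [Nat.mod_eq_of_lt (by omega), Nat.mod_eq_of_lt (by omega)] at this
        exact this
      · exfalso
        have : ((k + k' : ℕ) : ZMod p) = 0 := by push_cast [h]; ring
        rw [ZMod.natCast_eq_zero_iff] at this
        have := Nat.le_of_dvd (by omega) this
        omega
  have hcards : (q : ℝ) ≤ (T.card : ℝ) := by
    have : (Finset.Icc 1 q).card = q := by rw [Nat.card_Icc]; omega
    exact_mod_cast this ▸ hinj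
  have hTbound := count_bound np M hnp2
  rw [← hT] at hTbound
  -- final arithmetic
  set u := Real.sqrt ((np : ℝ) - 1) with hu
  have hu0 : 0 < u := Real.sqrt_pos.mpr (by
    have : (2:ℝ) ≤ np := by exact_mod_cast hnp2
    linarith)
  have hu2 : u ^ 2 = (np : ℝ) - 1 := Real.sq_sqrt (by
    have : (2:ℝ) ≤ np := by exact_mod_cast hnp2
    linarith)
  have hM2 : (Real.sqrt M) ^ 2 = (M : ℝ) := Real.sq_sqrt (by positivity)
  have hqB : (q : ℝ) ≤ Real.sqrt M * (2 / u) := hcards.trans hTbound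
  have hpq : (p : ℝ) ≤ 3 * q := by
    have hpr : (p:ℝ) = 2*(q:ℝ)+1 := by exact_mod_cast hqp.symm
    have hq1' : (1:ℝ) ≤ q := by exact_mod_cast hq1
    linarith
  have hpu : (p : ℝ) * u ≤ 6 * Real.sqrt M := by
    have h6 : (p : ℝ) ≤ 6 * Real.sqrt M / u := by
      rw [div_eq_mul_inv]
      calc (p:ℝ) ≤ 3 * q := hpq
        _ ≤ 3 * (Real.sqrt M * (2 / u)) := by nlinarith [hqB]
        _ = 6 * Real.sqrt M * u⁻¹ := by rw [div_eq_mul_inv]; ring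
    calc (p:ℝ) * u ≤ (6 * Real.sqrt M / u) * u := by
          apply mul_le_mul_of_nonneg_right h6 hu0.le
      _ = 6 * Real.sqrt M := by field_simp
  have hsq : ((p:ℝ) * u) * ((p:ℝ) * u) ≤ (6 * Real.sqrt M) * (6 * Real.sqrt M) :=
    mul_self_le_mul_self (by positivity) hpu
  have hnpr : (np : ℝ) ≤ 2 * ((np : ℝ) - 1) := by
    have : (2:ℝ) ≤ np := by exact_mod_cast hnp2
    linarith
  nlinarith [sq_nonneg ((p:ℝ)), hsq, hu2, hM2, hnpr, Real.sqrt_nonneg (M:ℝ),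
    sq_nonneg ((p:ℝ) * u)]
end

section
/- Let p be an odd prime, a a quadratic non-residue mod p, and n_p the least positive quadratic non-residue mod p. Then F(a,p), the least positive squarefull integer congruent to a mod p, satisfies F(a,p) ≤ n_p^3 * (p-1)^2. -/
theorem F_upper_bound_nonresidue (p : ℕ) [Fact p.Prime] (hp : Odd p)
    (a : ZMod p) (ha : ¬ IsSquare a)
    (np : ℕ) (hnp0 : 0 < np) (hnpns : ¬ IsSquare (np : ZMod p))
    (hnpmin : ∀ m : ℕ, 0 < m → ¬ IsSquare (m : ZMod p) → np ≤ m) :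
    ∃ n : ℕ, 0 < n ∧ Squarefull n ∧ (n : ZMod p) = a ∧ n ≤ np ^ 3 * (p - 1) ^ 2 := by
  have ha0 : a ≠ 0 := fun h => ha (h ▸ ⟨0, by ring⟩)
  have hnpz : (np : ZMod p) ≠ 0 := fun h => hnpns (h ▸ ⟨0, by ring⟩)
  -- product of two nonsquares is a square
  have hsq : IsSquare (a * (np : ZMod p)) := by
    have h1 : quadraticChar (ZMod p) a = -1 :=
      (quadraticChar_neg_one_iff_not_isSquare).mpr ha
    have h2 : quadraticChar (ZMod p) (np : ZMod p) = -1 :=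
      (quadraticChar_neg_one_iff_not_isSquare).mpr hnpns
    have hmul : quadraticChar (ZMod p) (a * (np : ZMod p)) = 1 := by
      rw [map_mul, h1, h2]; ring
    exact (quadraticChar_one_iff_isSquare (mul_ne_zero ha0 hnpz)).mp hmul
  obtain ⟨c, hc⟩ := hsq
  have hc0 : c ≠ 0 := by
    intro h; subst h
    exact mul_ne_zero ha0 hnpz (by simpa using hc)
  set d : ZMod p := c * ((np : ZMod p)⁻¹) ^ 2 with hd
  have hd0 : d ≠ 0 := mul_ne_zero hc0 (pow_ne_zero _ (inv_ne_zero hnpz))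
  have key : (np : ZMod p) ^ 3 * d ^ 2 = a := by
    have hinv : (np : ZMod p) * (np : ZMod p)⁻¹ = 1 := mul_inv_cancel₀ hnpz
    have : (np : ZMod p) ^ 3 * d ^ 2
        = (c * c) * ((np : ZMod p) * (np : ZMod p)⁻¹) ^ 3 * (np : ZMod p)⁻¹ := by
      rw [hd]; ring
    rw [this, hinv, one_pow, mul_one, ← hc]
    field_simp
  -- take b := d.val
  refine ⟨np ^ 3 * d.val ^ 2, ?_, ?_, ?_, ?_⟩
  · have : 0 < d.val := by
      rcases Nat.eq_zero_or_pos d.val with h | h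
      · exact absurd ((ZMod.val_eq_zero d).mp h) hd0
      · exact h
    positivity
  · intro q hq hdvd
    rcases (Nat.Prime.dvd_mul hq).mp hdvd with h | h
    · have : q ∣ np := hq.dvd_of_dvd_pow h
      calc q ^ 2 ∣ np ^ 3 := by
            rcases this with ⟨k, hk⟩; exact ⟨q * k ^ 3, by rw [hk]; ring⟩
        _ ∣ np ^ 3 * d.val ^ 2 := dvd_mul_right _ _
    · have : q ∣ d.val := hq.dvd_of_dvd_pow h
      exact Dvd.dvd.mul_left (pow_dvd_pow_of_dvd this 2) _
  · push_cast
    rw [ZMod.natCast_val, ZMod.cast_id]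
    exact key
  · have hlt : d.val ≤ p - 1 := Nat.le_sub_one_of_lt d.val_lt
    exact Nat.mul_le_mul_left _ (Nat.pow_le_pow_left hlt 2)
end
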